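/- Let H be a complex Hilbert space and let P₁ and P₂ be two (in general unbounded) symmetric operators on H, i.e. densely defined partial linear maps such that ⟪Pᵢ x, y⟫ = ⟪x, Pᵢ y⟫ for all x, y in the domain of Pᵢ. Assume that the domains of P₁ and P₂ are equal, that L is a linear subspace of the domain of P₁ which is dense in H, that P₁ and P₂ agree on L, and that the restrictions P₁|_L and P₂|_L are essentially self-adjoint (i.e. their closures are self-adjoint). Then P₁ = P₂. -/

import Mathlib

open scoped ComplexInnerProductSpace

open LinearPMap in
/-- A symmetric operator is contained in the closure of any of its dense restrictions,
provided that closure is self-adjoint. -/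
lemma aux_le_closure {H : Type*} [NormedAddCommGroup H] [InnerProductSpace ℂ H]
    [CompleteSpace H] (P : H →ₗ.[ℂ] H)
    (hsymm : ∀ x y : P.domain, ⟪P x, (y : H)⟫ = ⟪(x : H), P y⟫)
    (L : Submodule ℂ H) (hL : L ≤ P.domain) (hLdense : Dense (L : Set H))
    (hesa : IsSelfAdjoint (P.domRestrict L).closure) :
    P ≤ (P.domRestrict L).closure := by
  set R := P.domRestrict L with hR
  set A := R.closure with hA
  have hRdom : R.domain = L := by
    rw [hR, domRestrict_domain, inf_eq_left.mpr hL]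
  have hRdense : Dense (R.domain : Set H) := by rw [hRdom]; exact hLdense
  -- Step 1: P ≤ R†
  have hfa : R.IsFormalAdjoint P := by
    intro x y
    have hx : (x : H) ∈ P.domain := x.2.2
    have : R x = P ⟨(x : H), hx⟩ := domRestrict_apply rfl
    rw [this]
    exact hsymm _ y
  have h1 : P ≤ R† := hfa.le_adjoint hRdense
  -- Step 2: R† ≤ A†
  have hAdense : Dense (A.domain : Set H) := hesa.dense_domain
  have hfa2 : A.IsFormalAdjoint (R†) := by
    intro x y
    -- x : A.domain, y : R†.domain
    have hmem : ((x : H), A x) ∈ closure (R.graph : Set (H × H)) := by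
      by_cases hc : R.IsClosable
      · rw [← Submodule.topologicalClosure_coe, hc.graph_closure_eq_closure_graph]
        exact A.mem_graph x
      · have hAR : A = R := closure_def' hc
        obtain ⟨hde, hve⟩ := LinearPMap.ext_iff.mp hAR
        have hx : (x : H) ∈ R.domain := hde ▸ x.2
        have hv : A x = R ⟨(x : H), hx⟩ := hve (x := (x : H)) (hf := x.2) (hg := hx)
        exact subset_closure (hv ▸ R.mem_graph ⟨(x : H), hx⟩)
    have hcont : Continuous fun p : H × H => (⟪p.2, (y : H)⟫ - ⟪p.1, R† y⟫ : ℂ) :=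
      (continuous_snd.inner continuous_const).sub (continuous_fst.inner continuous_const)
    have hzero : Set.EqOn (fun p : H × H => (⟪p.2, (y : H)⟫ - ⟪p.1, R† y⟫ : ℂ)) 0
        (R.graph : Set (H × H)) := by
      intro p hp
      rcases R.mem_graph_iff.mp hp with ⟨u, hu1, hu2⟩
      have h := (adjoint_isFormalAdjoint hRdense) y u
      simp only [Pi.zero_apply, ← hu1, ← hu2, sub_eq_zero]
      calc ⟪(R u : H), (y : H)⟫ = starRingEnd ℂ ⟪(y : H), (R u : H)⟫ :=
            (inner_conj_symm _ _).symm
        _ = starRingEnd ℂ ⟪(R† y : H), (u : H)⟫ := by rw [h]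
        _ = ⟪(u : H), (R† y : H)⟫ := inner_conj_symm _ _
    have h0 := hzero.closure hcont continuous_const hmem
    have h0' : (⟪(A x : H), (y : H)⟫ - ⟪(x : H), (R† y : H)⟫ : ℂ) = 0 := h0
    exact sub_eq_zero.mp h0'
  have h2 : R† ≤ A† := hfa2.le_adjoint hAdense
  have h3 : A† = A := hesa
  calc P ≤ R† := h1
    _ ≤ A† := h2
    _ = A := h3

/-- If two symmetric operators with equal domains agree on a dense subspace `L` of the
Hilbert space on which their restrictions are essentially self-adjoint, then they are equal. -/
theorem stmt_0 {H : Type*} [NormedAddCommGroup H] [InnerProductSpace ℂ H] [CompleteSpace H]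
    (P₁ P₂ : H →ₗ.[ℂ] H)
    (hd₁ : Dense (P₁.domain : Set H)) (hd₂ : Dense (P₂.domain : Set H))
    (hsymm₁ : ∀ x y : P₁.domain, ⟪P₁ x, (y : H)⟫ = ⟪(x : H), P₁ y⟫)
    (hsymm₂ : ∀ x y : P₂.domain, ⟪P₂ x, (y : H)⟫ = ⟪(x : H), P₂ y⟫)
    (hdom : P₁.domain = P₂.domain)
    (L : Submodule ℂ H) (hL : L ≤ P₁.domain) (hLdense : Dense (L : Set H))
    (hagree : ∀ (x : P₁.domain) (y : P₂.domain), (x : H) = (y : H) → (x : H) ∈ L → P₁ x = P₂ y)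
    (hesa₁ : IsSelfAdjoint (P₁.domRestrict L).closure)
    (hesa₂ : IsSelfAdjoint (P₂.domRestrict L).closure) :
    P₁ = P₂ := by
  have hL₂ : L ≤ P₂.domain := hdom ▸ hL
  -- The restrictions coincide
  have hRs : P₁.domRestrict L = P₂.domRestrict L := by
    apply LinearPMap.ext
    · rw [LinearPMap.domRestrict_domain, LinearPMap.domRestrict_domain, hdom]
    · intro x₀ hx₀ hy₀
      let x : (P₁.domRestrict L).domain := ⟨x₀, hx₀⟩
      let y : (P₂.domRestrict L).domain := ⟨x₀, hy₀⟩
      have hxy : (x : H) = y := rfl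
      show P₁.domRestrict L x = P₂.domRestrict L y
      have hx1 : (x : H) ∈ P₁.domain := x.2.2
      have hy2 : (y : H) ∈ P₂.domain := y.2.2
      have e1 : P₁.domRestrict L x = P₁ ⟨(x : H), hx1⟩ := LinearPMap.domRestrict_apply rfl
      have e2 : P₂.domRestrict L y = P₂ ⟨(y : H), hy2⟩ := LinearPMap.domRestrict_apply rfl
      rw [e1, e2]
      exact hagree _ _ hxy x.2.1
  have h1 := aux_le_closure P₁ hsymm₁ L hL hLdense hesa₁
  have h2 := aux_le_closure P₂ hsymm₂ L hL₂ hLdense hesa₂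
  rw [hRs] at h1
  apply LinearPMap.ext hdom
  intro x₀ hx₀ hy₀
  let x : P₁.domain := ⟨x₀, hx₀⟩
  let y : P₂.domain := ⟨x₀, hy₀⟩
  have hxy : (x : H) = y := rfl
  show P₁ x = P₂ y
  have hx' : (x : H) ∈ (P₂.domRestrict L).closure.domain := h1.1 x.2
  have := h1.2 (x := x) (y := ⟨(x : H), hx'⟩) rfl
  rw [this]
  exact (h2.2 (x := y) (y := ⟨(x : H), hx'⟩) hxy.symm).symm
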